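/- Let B = B0 + B1ε ∈ DQ^{k×l} and C = C0 + C1ε ∈ DQ^{n×l}. Set B2 = R_{B0}·B1, C2 = C1 − C0·B0†·B1, B00 = B2·L_{B0}, C00 = C2·L_{B0}, and assume C0·L_{B0} = 0 and C00·L_{B00} = 0. Then a dual quaternion matrix Y = Y0 + Y1ε ∈ DQ^{n×k} satisfies YB = C if and only if there exist quaternion matrices W1, W2 of appropriate sizes such that, with W = C00·B00† + W2·R_{B00}, one has Y0 = C0·B0† + W·R_{B0} and Y1 = (C2 − W·B2)·B0† + W1·R_{B0}. -/
import Mathlib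


open Matrix

/-- Quaternion matrices of size `p × q`. -/
abbrev QM (p q : ℕ) := Matrix (Fin p) (Fin q) (Quaternion ℝ)

/-- `Ad` is a Moore–Penrose inverse of the quaternion matrix `A`. -/
def IsMP {p q : ℕ} (A : QM p q) (Ad : QM q p) : Prop :=
  A * Ad * A = A ∧ Ad * A * Ad = Ad ∧ (A * Ad)ᴴ = A * Ad ∧ (Ad * A)ᴴ = Ad * A

/-- The dual quaternion matrix `A0 + A1 ε`, realized as a matrix over the
dual numbers (dual quaternions) `DualNumber (Quaternion ℝ)`. -/
noncomputable def dm {p q : ℕ} (A0 A1 : QM p q) :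
    Matrix (Fin p) (Fin q) (DualNumber (Quaternion ℝ)) :=
  A0.map TrivSqZeroExt.inl + A1.map TrivSqZeroExt.inr

lemma dm_mul {p q r : ℕ} (A0 A1 : QM p q) (B0 B1 : QM q r) :
    dm A0 A1 * dm B0 B1 = dm (A0 * B0) (A0 * B1 + A1 * B0) := by
  refine Matrix.ext fun i j => TrivSqZeroExt.ext ?_ ?_ <;>
  · simp only [dm, Matrix.add_apply, Matrix.map_apply, Matrix.mul_apply,
      TrivSqZeroExt.fst_sum, TrivSqZeroExt.snd_sum, TrivSqZeroExt.fst_mul,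
      TrivSqZeroExt.snd_mul, TrivSqZeroExt.fst_add, TrivSqZeroExt.snd_add,
      TrivSqZeroExt.fst_inl, TrivSqZeroExt.snd_inl, TrivSqZeroExt.fst_inr,
      TrivSqZeroExt.snd_inr, add_zero, zero_add, smul_zero, smul_eq_mul,
      MulOpposite.smul_eq_mul_unop, MulOpposite.unop_op, Finset.sum_add_distrib]

lemma dm_inj {p q : ℕ} (A0 A1 B0 B1 : QM p q) :
    dm A0 A1 = dm B0 B1 ↔ A0 = B0 ∧ A1 = B1 := by
  constructor
  · intro h
    have h1 : ∀ i j, (TrivSqZeroExt.inl (A0 i j) + TrivSqZeroExt.inr (A1 i j)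
        : DualNumber (Quaternion ℝ)) = TrivSqZeroExt.inl (B0 i j) + TrivSqZeroExt.inr (B1 i j) :=
      fun i j => by simpa [dm] using congrFun (congrFun h i) j
    refine ⟨Matrix.ext fun i j => ?_, Matrix.ext fun i j => ?_⟩
    · simpa using congrArg TrivSqZeroExt.fst (h1 i j)
    · simpa using congrArg TrivSqZeroExt.snd (h1 i j)
  · rintro ⟨rfl, rfl⟩; rfl


/-- The rank of a quaternion matrix: the dimension (over `ℍ`) of the left
`ℍ`-submodule spanned by its rows. -/
noncomputable def qrank {m n : Type*} (A : Matrix m n (Quaternion ℝ)) : ℕ :=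
  Module.finrank (Quaternion ℝ)
    (Submodule.span (Quaternion ℝ) (Set.range (fun i : m => fun j : n => A i j)))

/-- under the solvability conditions, `Y = Y0 + Y1 ε` solves
`Y B = C` iff it has the displayed form. -/
theorem stmt16 {k l n : ℕ}
    (B0 B1 : QM k l) (C0 C1 : QM n l)
    (B0d : QM l k) (hB0d : IsMP B0 B0d)
    (B2 : QM k l) (hB2 : B2 = (1 - B0 * B0d) * B1)
    (C2 : QM n l) (hC2 : C2 = C1 - C0 * B0d * B1)
    (B00 : QM k l) (hB00 : B00 = B2 * (1 - B0d * B0))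
    (B00d : QM l k) (hB00d : IsMP B00 B00d)
    (C00 : QM n l) (hC00 : C00 = C2 * (1 - B0d * B0))
    (hcond1 : C0 * (1 - B0d * B0) = 0)
    (hcond2 : C00 * (1 - B00d * B00) = 0)
    (Y0 Y1 : QM n k) :
    dm Y0 Y1 * dm B0 B1 = dm C0 C1 ↔
      ∃ (W1 W2 : QM n k) (W : QM n k),
        W = C00 * B00d + W2 * (1 - B00 * B00d) ∧
        Y0 = C0 * B0d + W * (1 - B0 * B0d) ∧
        Y1 = (C2 - W * B2) * B0d + W1 * (1 - B0 * B0d) := by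
  have hP : B0 * B0d * B0 = B0 := hB0d.1
  have hQ : B00 * B00d * B00 = B00 := hB00d.1
  have fact1 : (1 - B0 * B0d) * B0 = 0 := by rw [Matrix.sub_mul, Matrix.one_mul, hP, sub_self]
  have fact2 : B0 * (1 - B0d * B0) = 0 := by
    rw [Matrix.mul_sub, Matrix.mul_one, ← Matrix.mul_assoc, hP, sub_self]
  have fact3 : (1 - B00 * B00d) * B00 = 0 := by rw [Matrix.sub_mul, Matrix.one_mul, hQ, sub_self]
  have hC0' : C0 * B0d * B0 = C0 := by
    rw [Matrix.mul_sub, Matrix.mul_one, sub_eq_zero] at hcond1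
    rw [Matrix.mul_assoc]; exact hcond1.symm
  have hC00' : C00 * B00d * B00 = C00 := by
    rw [Matrix.mul_sub, Matrix.mul_one, sub_eq_zero] at hcond2
    rw [Matrix.mul_assoc]; exact hcond2.symm
  rw [dm_mul, dm_inj]
  constructor
  · rintro ⟨h1, h2⟩
    have hY0B00 : Y0 * B00 = C00 := by
      have key : Y0 * B00 - C00 = (Y0 * B1 + Y1 * B0 - C1) * (1 - B0d * B0)
          - Y1 * (B0 * (1 - B0d * B0)) - (Y0 * B0 - C0) * (B0d * (B1 * (1 - B0d * B0))) := by
        subst hB00 hC00 hB2 hC2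
        simp only [Matrix.mul_sub, Matrix.sub_mul, Matrix.mul_add, Matrix.add_mul,
          Matrix.mul_one, Matrix.one_mul, Matrix.mul_assoc]
        abel
      rw [h1, h2, fact2, sub_self, sub_self, Matrix.zero_mul, Matrix.zero_mul, Matrix.mul_zero,
        sub_zero, sub_zero] at key
      exact sub_eq_zero.mp key
    refine ⟨Y1, Y0, Y0, ?_, ?_, ?_⟩
    · rw [Matrix.mul_sub, Matrix.mul_one, ← Matrix.mul_assoc, hY0B00]; abel
    · rw [Matrix.mul_sub, Matrix.mul_one, ← Matrix.mul_assoc, h1]; abel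
    · have hC2' : C2 - Y0 * B2 = Y1 * B0 := by
        have key : C2 - Y0 * B2 - Y1 * B0
            = -(Y0 * B1 + Y1 * B0 - C1) + (Y0 * B0 - C0) * (B0d * B1) := by
          subst hB2 hC2
          simp only [Matrix.mul_sub, Matrix.sub_mul, Matrix.mul_add, Matrix.add_mul,
            Matrix.mul_one, Matrix.one_mul, Matrix.mul_assoc]
          abel
        rw [h1, h2, sub_self, sub_self, neg_zero, Matrix.zero_mul, add_zero] at key
        exact sub_eq_zero.mp key
      rw [hC2', Matrix.mul_sub, Matrix.mul_one, ← Matrix.mul_assoc]; abel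
  · rintro ⟨W1, W2, W, hW, hY0, hY1⟩
    have hWB00 : W * B00 = C00 := by
      rw [hW, Matrix.add_mul, Matrix.mul_assoc W2, fact3, Matrix.mul_zero, add_zero]
      exact hC00'
    have key : (C2 - W * B2) * (B0d * B0) = C2 - W * B2 := by
      have h0 : (C2 - W * B2) * (1 - B0d * B0) = 0 := by
        rw [Matrix.sub_mul, ← hC00, Matrix.mul_assoc, ← hB00, hWB00, sub_self]
      rw [Matrix.mul_sub, Matrix.mul_one, sub_eq_zero] at h0
      exact h0.symm
    constructor
    · rw [hY0, Matrix.add_mul, Matrix.mul_assoc W, fact1, Matrix.mul_zero, add_zero]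
      exact hC0'
    · rw [hY0, hY1, Matrix.add_mul, Matrix.add_mul, Matrix.mul_assoc W, ← hB2, Matrix.mul_assoc W1, fact1,
        Matrix.mul_zero, add_zero, Matrix.mul_assoc (C2 - W * B2), key, hC2]
      abel
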